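/- arXiv:2505.19343 — 2 statements merged into one kernel-verified Lean document; each statement's English description precedes it below -/
import Mathlib

section
/- Let S^1 denote the unit circle in ℝ² and D^2 the closed unit disk in ℝ². The quotient topological space of (S^1 × [0,1]) × [0,1] by the equivalence relation generated by ((z,a),t) ~ ((z,a),t') for all z ∈ S^1, a ∈ {0,1}, and t,t' ∈ [0,1], is homeomorphic to the solid torus S^1 × D^2. -/
open Metric unitInterval

noncomputable section

/-- The closed unit ball (disk) in `EuclideanSpace ℝ (Fin m)`. -/
def Disk (m : ℕ) : Set (EuclideanSpace ℝ (Fin m)) := Metric.closedBall 0 1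

/-- The unit sphere of dimension `m` in `EuclideanSpace ℝ (Fin (m+1))`. -/
def Sph (m : ℕ) : Set (EuclideanSpace ℝ (Fin (m + 1))) := Metric.sphere 0 1

/-- The relation generating the half open book quotient on the annulus page
`S¹ × [0,1]`: `((z,a), t) ~ ((z,a), t')` for `a ∈ {0,1}` and all `t, t' ∈ [0,1]`. -/
def annulusHobRel (p q : (↥(Sph 1) × I) × I) : Prop :=
  p.1 = q.1 ∧ (p.1.2 = 0 ∨ p.1.2 = 1)

namespace HOBAux

/-- Parametrization of the disk by a square, collapsing the sides `a = 0` and `a = 1`. -/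
noncomputable def toDisk (a t : ℝ) : EuclideanSpace ℝ (Fin 2) :=
  WithLp.toLp 2 ![2*a - 1, (2*t - 1) * Real.sqrt (1 - (2*a - 1)^2)]

lemma toDisk_apply_zero (a t : ℝ) : toDisk a t 0 = 2*a - 1 := rfl
lemma toDisk_apply_one (a t : ℝ) : toDisk a t 1 = (2*t - 1) * Real.sqrt (1 - (2*a - 1)^2) := rfl

lemma toDisk_mem {a t : ℝ} (ha : a ∈ Set.Icc (0:ℝ) 1) (ht : t ∈ Set.Icc (0:ℝ) 1) :
    toDisk a t ∈ Disk 2 := by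
  have hx : (2*a - 1)^2 ≤ 1 := by nlinarith [ha.1, ha.2]
  have hs : Real.sqrt (1 - (2*a - 1)^2) ^ 2 = 1 - (2*a - 1)^2 :=
    Real.sq_sqrt (by linarith)
  have ht2 : (2*t - 1)^2 ≤ 1 := by nlinarith [ht.1, ht.2]
  have hnorm : ‖toDisk a t‖ ≤ 1 := by
    rw [EuclideanSpace.norm_eq, Fin.sum_univ_two, toDisk_apply_zero, toDisk_apply_one]
    rw [Real.norm_eq_abs, Real.norm_eq_abs, sq_abs, sq_abs]
    refine le_trans (Real.sqrt_le_sqrt ?_) (le_of_eq Real.sqrt_one)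
    nlinarith [hs, Real.sqrt_nonneg (1 - (2*a - 1)^2)]
  simpa [Disk, mem_closedBall_zero_iff] using hnorm

noncomputable def f (p : (↥(Sph 1) × I) × I) : ↥(Sph 1) × ↥(Disk 2) :=
  (p.1.1, ⟨toDisk p.1.2 p.2, toDisk_mem p.1.2.2 p.2.2⟩)

lemma f_const : ∀ p q, annulusHobRel p q → f p = f q := by
  rintro ⟨⟨z, a⟩, t⟩ ⟨⟨z', a'⟩, t'⟩ ⟨h1, h2⟩
  obtain ⟨rfl, rfl⟩ : z = z' ∧ a = a' := by simpa [Prod.ext_iff] using h1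
  have hs : Real.sqrt (1 - (2*(a:ℝ) - 1)^2) = 0 := by
    rcases h2 with h | h <;>
    · have h' : (a:ℝ) = 0 ∨ (a:ℝ) = 1 := by
        first
          | exact Or.inl (by exact_mod_cast congrArg Subtype.val h)
          | exact Or.inr (by exact_mod_cast congrArg Subtype.val h)
      rcases h' with h' | h' <;> rw [h'] <;> norm_num
  simp [f, toDisk, hs, Prod.ext_iff, Subtype.ext_iff]

lemma continuous_f : Continuous f := by
  refine Continuous.prodMk (continuous_fst.comp continuous_fst) (Continuous.subtype_mk ?_ _)
  have h : Continuous fun p : (↥(Sph 1) × I) × I =>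
      (![2*(p.1.2:ℝ) - 1,
        (2*(p.2:ℝ) - 1) * Real.sqrt (1 - (2*(p.1.2:ℝ) - 1)^2)] : Fin 2 → ℝ) := by
    apply continuous_pi
    intro i
    fin_cases i
    · show Continuous fun p : (↥(Sph 1) × I) × I => 2*(p.1.2:ℝ) - 1
      fun_prop
    · show Continuous fun p : (↥(Sph 1) × I) × I =>
        (2*(p.2:ℝ) - 1) * Real.sqrt (1 - (2*(p.1.2:ℝ) - 1)^2)
      apply Continuous.mul
      · fun_prop
      · exact (Real.continuous_sqrt).comp (by fun_prop)
  exact ((EuclideanSpace.equiv (Fin 2) ℝ).symm.continuous).comp h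

lemma f_inj : ∀ p q, f p = f q → Quot.mk annulusHobRel p = Quot.mk annulusHobRel q := by
  rintro ⟨⟨z, a⟩, t⟩ ⟨⟨z', a'⟩, t'⟩ h
  have hz : z = z' := congrArg Prod.fst h
  have hd : toDisk a t = toDisk a' t' := congrArg Subtype.val (congrArg Prod.snd h)
  have h0 : (2*(a:ℝ) - 1) = (2*(a':ℝ) - 1) := by
    have := congrArg (· 0) hd; simpa [toDisk_apply_zero] using this
  have haa : (a:ℝ) = (a':ℝ) := by linarith
  have ha : a = a' := Subtype.ext haa
  subst ha hz
  have h1 : (2*(t:ℝ) - 1) * Real.sqrt (1 - (2*(a:ℝ) - 1)^2)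
      = (2*(t':ℝ) - 1) * Real.sqrt (1 - (2*(a:ℝ) - 1)^2) := by
    have := congrArg (· 1) hd; simpa [toDisk_apply_one] using this
  by_cases hs : Real.sqrt (1 - (2*(a:ℝ) - 1)^2) = 0
  · -- boundary case: a = 0 or a = 1
    have hx : (2*(a:ℝ) - 1)^2 ≤ 1 := by nlinarith [a.2.1, a.2.2]
    have : 1 - (2*(a:ℝ) - 1)^2 = 0 := by
      have := Real.sqrt_eq_zero (by linarith : (0:ℝ) ≤ 1 - (2*(a:ℝ) - 1)^2) |>.mp hs
      linarith
    have hcase : (a:ℝ) = 0 ∨ (a:ℝ) = 1 := by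
      have h2 : (2*(a:ℝ) - 1)^2 = 1 := by linarith
      have : (2*(a:ℝ) - 1 - 1) * (2*(a:ℝ) - 1 + 1) = 0 := by nlinarith
      rcases mul_eq_zero.mp this with h | h
      · right; linarith
      · left; linarith
    apply Quot.sound
    refine ⟨rfl, ?_⟩
    rcases hcase with h | h
    · exact Or.inl (Subtype.ext (by simpa using h))
    · exact Or.inr (Subtype.ext (by simpa using h))
  · have : (2*(t:ℝ) - 1) = (2*(t':ℝ) - 1) := mul_right_cancel₀ hs h1
    have ht : t = t' := Subtype.ext (by linarith)
    subst ht
    rfl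

lemma f_surj : Function.Surjective f := by
  rintro ⟨z, ⟨d, hd⟩⟩
  set x : ℝ := d 0 with hxdef
  set y : ℝ := d 1 with hydef
  have hxy : x^2 + y^2 ≤ 1 := by
    have h := mem_closedBall_zero_iff.mp hd
    rw [EuclideanSpace.norm_eq, Fin.sum_univ_two, Real.norm_eq_abs, Real.norm_eq_abs,
      sq_abs, sq_abs] at h
    nlinarith [Real.sq_sqrt (by positivity : (0:ℝ) ≤ (d 0)^2 + (d 1)^2),
      Real.sqrt_nonneg ((d 0)^2 + (d 1)^2)]
  have hx2 : x^2 ≤ 1 := by nlinarith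
  set s : ℝ := Real.sqrt (1 - x^2) with hsdef
  have hs0 : 0 ≤ s := Real.sqrt_nonneg _
  have hs2 : s^2 = 1 - x^2 := Real.sq_sqrt (by linarith)
  have hys : y^2 ≤ s^2 := by rw [hs2]; nlinarith
  have ha : (x+1)/2 ∈ Set.Icc (0:ℝ) 1 := by
    constructor
    · nlinarith [sq_nonneg (x+1)]
    · nlinarith [sq_nonneg (x-1)]
  set t : ℝ := (y/s + 1)/2 with htdef
  have ht : t ∈ Set.Icc (0:ℝ) 1 := by
    by_cases hs : s = 0
    · simp [htdef, hs]; norm_num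
    · have hspos : 0 < s := lt_of_le_of_ne hs0 (Ne.symm hs)
      have h1 : -s ≤ y := by nlinarith [hys, hs0, sq_nonneg (y + s)]
      have h2 : y ≤ s := by nlinarith [hys, hs0, sq_nonneg (y - s)]
      constructor
      · rw [htdef]
        have : -1 ≤ y / s := by rw [le_div_iff₀ hspos]; linarith
        linarith
      · rw [htdef]
        have : y / s ≤ 1 := by rw [div_le_one hspos]; linarith
        linarith
  refine ⟨((z, ⟨(x+1)/2, ha⟩), ⟨t, ht⟩), ?_⟩
  refine Prod.ext rfl (Subtype.ext ?_)
  show toDisk ((x+1)/2) t = d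
  have hax : 2*((x+1)/2) - 1 = x := by ring
  ext i
  fin_cases i
  · show toDisk ((x+1)/2) t 0 = d 0
    rw [toDisk_apply_zero, hax, hxdef]
  · show toDisk ((x+1)/2) t 1 = d 1
    rw [toDisk_apply_one, hax, ← hsdef, ← hydef]
    by_cases hs : s = 0
    · have hy0 : y = 0 := by nlinarith [sq_nonneg y, hs2, hs ▸ hs2]
      rw [hs, hy0, mul_zero]
    · have : 2*t - 1 = y / s := by rw [htdef]; ring
      rw [this, div_mul_cancel₀ _ hs]

end HOBAux

instance : CompactSpace ↥(Sph 1) :=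
  isCompact_iff_compactSpace.mp (isCompact_sphere 0 1)

instance : CompactSpace (Quot annulusHobRel) := by
  constructor
  rw [← Set.range_eq_univ.mpr (Quot.mk_surjective (r := annulusHobRel)), ← Set.image_univ]
  exact isCompact_univ.image continuous_quot_mk

/-- The half open book with annulus page is homeomorphic to the solid torus `S¹ × D²`. -/
theorem halfOpenBook_annulus_homeomorph_solidTorus :
    Nonempty (Quot annulusHobRel ≃ₜ ↥(Sph 1) × ↥(Disk 2)) := by
  have hinj : Function.Injective (Quot.lift HOBAux.f HOBAux.f_const) := by
    intro p q h
    induction p using Quot.ind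
    induction q using Quot.ind
    exact HOBAux.f_inj _ _ h
  have hsurj : Function.Surjective (Quot.lift HOBAux.f HOBAux.f_const) := by
    intro y
    obtain ⟨p, hp⟩ := HOBAux.f_surj y
    exact ⟨Quot.mk _ p, hp⟩
  have hcont : Continuous (Quot.lift HOBAux.f HOBAux.f_const) :=
    continuous_quot_lift _ HOBAux.continuous_f
  exact ⟨Continuous.homeoOfEquivCompactToT2
    (f := Equiv.ofBijective _ ⟨hinj, hsurj⟩) hcont⟩
end
end

section
/- Let k ≥ 1 and m ≥ 1. The quotient topological space of (S^k × D^m) × [0,1] by the equivalence relation generated by ((z,y),t) ~ ((z,y),t') for all z ∈ S^k, y ∈ D^m with ‖y‖ = 1, t,t' ∈ [0,1], and ((z,x),1) ~ ((z,x),0) for all (z,x) ∈ S^k × D^m, is homeomorphic to S^k × S^{m+1}. -/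
open Metric unitInterval

noncomputable section

/-- The relation generating the open book quotient on the page `S^k × D^m` with trivial
monodromy: `((z,y),t) ~ ((z,y),t')` for `‖y‖ = 1` and `((z,x),1) ~ ((z,x),0)`. -/
def obRelSD (k m : ℕ) (p q : (↥(Sph k) × ↥(Disk m)) × I) : Prop :=
  (p.1 = q.1 ∧ ‖(p.1.2 : EuclideanSpace ℝ (Fin m))‖ = 1) ∨
  (p.1 = q.1 ∧ p.2 = 1 ∧ q.2 = 0)

open Real

noncomputable def sphMap (m : ℕ) (y : EuclideanSpace ℝ (Fin m)) (t : ℝ) :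
    EuclideanSpace ℝ (Fin (m+2)) :=
  WithLp.toLp 2 (Fin.snoc (Fin.snoc (fun j => y j) (Real.sqrt (1 - ‖y‖^2) * Real.cos (2*π*t)))
    (Real.sqrt (1 - ‖y‖^2) * Real.sin (2*π*t)) : Fin (m+2) → ℝ)

lemma sphMap_castSucc (m : ℕ) (y : EuclideanSpace ℝ (Fin m)) (t : ℝ) (j : Fin m) :
    sphMap m y t (Fin.castSucc (Fin.castSucc j)) = y j := by simp [sphMap]

lemma sphMap_cos (m : ℕ) (y : EuclideanSpace ℝ (Fin m)) (t : ℝ) :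
    sphMap m y t (Fin.castSucc (Fin.last m)) = Real.sqrt (1 - ‖y‖^2) * Real.cos (2*π*t) := by
  simp [sphMap]

lemma sphMap_sin (m : ℕ) (y : EuclideanSpace ℝ (Fin m)) (t : ℝ) :
    sphMap m y t (Fin.last (m+1)) = Real.sqrt (1 - ‖y‖^2) * Real.sin (2*π*t) := by
  simp [sphMap]

lemma sphMap_boundary (m : ℕ) (y : EuclideanSpace ℝ (Fin m)) (t t' : ℝ) (hy : ‖y‖ = 1) :
    sphMap m y t = sphMap m y t' := by
  unfold sphMap
  rw [show (1 : ℝ) - ‖y‖^2 = 0 by rw [hy]; ring, Real.sqrt_zero]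
  simp

lemma euclid_norm_sq (m : ℕ) (y : EuclideanSpace ℝ (Fin m)) :
    ∑ j : Fin m, (y j)^2 = ‖y‖^2 := by
  rw [EuclideanSpace.norm_eq, Real.sq_sqrt (by positivity)]
  simp [Real.norm_eq_abs, sq_abs]

lemma sphMap_norm (m : ℕ) (y : EuclideanSpace ℝ (Fin m)) (t : ℝ) (hy : ‖y‖ ≤ 1) :
    ‖sphMap m y t‖ = 1 := by
  have h0 : (0:ℝ) ≤ 1 - ‖y‖^2 := by nlinarith [norm_nonneg y]
  rw [EuclideanSpace.norm_eq]
  have : ∑ i : Fin (m+2), ‖sphMap m y t i‖^2 = 1 := by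
    rw [Fin.sum_univ_castSucc, Fin.sum_univ_castSucc]
    have hs : ∀ j : Fin m, ‖sphMap m y t (Fin.castSucc (Fin.castSucc j))‖^2 = (y j)^2 := by
      intro j; rw [sphMap_castSucc]; simp [Real.norm_eq_abs, sq_abs]
    rw [Finset.sum_congr rfl fun j _ => hs j, euclid_norm_sq, sphMap_cos, sphMap_sin]
    have hr : Real.sqrt (1 - ‖y‖^2)^2 = 1 - ‖y‖^2 := Real.sq_sqrt h0
    have := Real.sin_sq_add_cos_sq (2*π*t)
    simp only [Real.norm_eq_abs, sq_abs]
    nlinarith [this, hr]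
  rw [this, Real.sqrt_one]

noncomputable def obF (k m : ℕ) (p : (↥(Sph k) × ↥(Disk m)) × I) :
    ↥(Sph k) × ↥(Sph (m + 1)) :=
  (p.1.1, ⟨sphMap m (p.1.2 : EuclideanSpace ℝ (Fin m)) (p.2 : ℝ), by
    have hy : ‖(p.1.2 : EuclideanSpace ℝ (Fin m))‖ ≤ 1 := by
      have h := p.1.2.2
      simp only [Disk] at h
      rwa [mem_closedBall_zero_iff] at h
    simpa [Sph, mem_sphere_zero_iff_norm] using sphMap_norm m _ _ hy⟩)

lemma obF_rel (k m : ℕ) : ∀ p q, obRelSD k m p q → obF k m p = obF k m q := by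
  rintro ⟨⟨z, y⟩, t⟩ ⟨⟨z', y'⟩, t'⟩ (⟨h1, hnorm⟩ | ⟨h1, hp2, hq2⟩)
  · rw [Prod.mk.injEq] at h1
    obtain ⟨hz, hy⟩ := h1
    subst hz; subst hy
    exact Prod.ext rfl (Subtype.ext (sphMap_boundary m _ _ _ hnorm))
  · rw [Prod.mk.injEq] at h1
    obtain ⟨hz, hy⟩ := h1
    subst hz; subst hy; subst hp2; subst hq2
    refine Prod.ext rfl (Subtype.ext ?_)
    show sphMap m (y : EuclideanSpace ℝ (Fin m)) ((1:I):ℝ) =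
      sphMap m (y : EuclideanSpace ℝ (Fin m)) ((0:I):ℝ)
    unfold sphMap
    norm_num
-- appended part; will compile with t3 + t2 angle lemmas combined
lemma exists_angle (c s : ℝ) (h : c^2 + s^2 = 1) :
    ∃ t : ℝ, t ∈ Set.Icc (0:ℝ) 1 ∧ Real.cos (2*π*t) = c ∧ Real.sin (2*π*t) = s := by
  have hc : -1 ≤ c ∧ c ≤ 1 := by constructor <;> nlinarith
  have hpi : (0:ℝ) < π := Real.pi_pos
  have hsa : Real.sin (Real.arccos c) = Real.sqrt (1 - c^2) := Real.sin_arccos c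
  have h1c : Real.sqrt (1 - c^2) = |s| := by
    rw [show 1 - c^2 = s^2 by nlinarith]; exact Real.sqrt_sq_eq_abs s
  rcases le_or_gt 0 s with hs | hs
  · refine ⟨Real.arccos c / (2*π), ⟨div_nonneg (Real.arccos_nonneg c) (by positivity), ?_⟩, ?_, ?_⟩
    · rw [div_le_one (by positivity)]
      nlinarith [Real.arccos_le_pi c]
    · rw [mul_div_cancel₀ _ (by positivity), Real.cos_arccos hc.1 hc.2]
    · rw [mul_div_cancel₀ _ (by positivity), hsa, h1c, abs_of_nonneg hs]
  · refine ⟨(2*π - Real.arccos c) / (2*π), ⟨?_, ?_⟩, ?_, ?_⟩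
    · have := Real.arccos_le_pi c
      apply div_nonneg _ (by positivity)
      nlinarith
    · rw [div_le_one (by positivity)]
      nlinarith [Real.arccos_nonneg c]
    · rw [mul_div_cancel₀ _ (by positivity), Real.cos_sub, Real.cos_two_pi, Real.sin_two_pi,
        Real.cos_arccos hc.1 hc.2]
      ring
    · rw [mul_div_cancel₀ _ (by positivity), Real.sin_sub, Real.cos_two_pi, Real.sin_two_pi,
        hsa, h1c, abs_of_neg hs]
      ring

lemma angle_inj {s t : ℝ} (hs : s ∈ Set.Icc (0:ℝ) 1) (ht : t ∈ Set.Icc (0:ℝ) 1)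
    (hc : Real.cos (2*π*s) = Real.cos (2*π*t)) (hsin : Real.sin (2*π*s) = Real.sin (2*π*t)) :
    s = t ∨ (s = 1 ∧ t = 0) ∨ (s = 0 ∧ t = 1) := by
  have := Real.Angle.cos_sin_inj hc hsin
  rw [Real.Angle.angle_eq_iff_two_pi_dvd_sub] at this
  obtain ⟨n, hn⟩ := this
  have hst : s - t = n := by
    have hpi : (0:ℝ) < π := Real.pi_pos
    have h2 : (2*π)*(s-t) = (2*π)*n := by linarith
    exact mul_left_cancel₀ (by positivity) h2
  have hb1 : (-1:ℤ) ≤ n := by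
    have : (-1:ℝ) ≤ (n:ℝ) := by rw [← hst]; linarith [hs.1, ht.2]
    exact_mod_cast this
  have hb2 : n ≤ (1:ℤ) := by
    have : (n:ℝ) ≤ 1 := by rw [← hst]; linarith [hs.2, ht.1]
    exact_mod_cast this
  interval_cases n
  · right; right
    have : s - t = -1 := by rw [hst]; norm_num
    constructor <;> linarith [hs.1, ht.2]
  · left
    have : s - t = 0 := by rw [hst]; norm_num
    linarith
  · right; left
    have : s - t = 1 := by rw [hst]; norm_num
    constructor <;> linarith [hs.2, ht.1]

lemma obF_inj (k m : ℕ) : ∀ p q, obF k m p = obF k m q →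
    Quot.mk (obRelSD k m) p = Quot.mk (obRelSD k m) q := by
  rintro ⟨⟨z, y⟩, t⟩ ⟨⟨z', y'⟩, t'⟩ h
  obtain ⟨h1, h2⟩ := Prod.ext_iff.mp h
  replace h2 := congrArg Subtype.val h2
  simp only [obF] at h1 h2
  have hy : (y : EuclideanSpace ℝ (Fin m)) = (y' : EuclideanSpace ℝ (Fin m)) := by
    ext j
    have := congrArg (fun v : EuclideanSpace ℝ (Fin (m+2)) =>
      v (Fin.castSucc (Fin.castSucc j))) h2
    simpa [sphMap_castSucc] using this
  have hyy : y = y' := Subtype.ext hy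
  subst hyy; subst h1
  have hyle : ‖(y : EuclideanSpace ℝ (Fin m))‖ ≤ 1 := by
    have h := y.2
    simp only [Disk] at h
    rwa [mem_closedBall_zero_iff] at h
  rcases eq_or_lt_of_le hyle with hb | hlt
  · exact Quot.sound (Or.inl ⟨rfl, hb⟩)
  · have hr : 0 < Real.sqrt (1 - ‖(y : EuclideanSpace ℝ (Fin m))‖^2) :=
      Real.sqrt_pos.mpr (by nlinarith [norm_nonneg (y : EuclideanSpace ℝ (Fin m))])
    have hccos := congrArg (fun v : EuclideanSpace ℝ (Fin (m+2)) =>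
      v (Fin.castSucc (Fin.last m))) h2
    have hcsin := congrArg (fun v : EuclideanSpace ℝ (Fin (m+2)) => v (Fin.last (m+1))) h2
    simp only [sphMap_cos, sphMap_sin, hy] at hccos hcsin
    have hcos : Real.cos (2*π*(t:ℝ)) = Real.cos (2*π*(t':ℝ)) :=
      mul_left_cancel₀ hr.ne' hccos
    have hsin : Real.sin (2*π*(t:ℝ)) = Real.sin (2*π*(t':ℝ)) :=
      mul_left_cancel₀ hr.ne' hcsin
    rcases angle_inj t.2 t'.2 hcos hsin with heq | ⟨ha, hb⟩ | ⟨ha, hb⟩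
    · have : t = t' := Subtype.ext heq
      subst this; rfl
    · exact Quot.sound (Or.inr ⟨rfl, Subtype.ext ha, Subtype.ext hb⟩)
    · refine Eq.symm (Quot.sound ?_)
      exact Or.inr ⟨rfl, Subtype.ext hb, Subtype.ext ha⟩

lemma obF_surj (k m : ℕ) : Function.Surjective (obF k m) := by
  rintro ⟨z, u⟩
  set v : EuclideanSpace ℝ (Fin (m+2)) := (u : EuclideanSpace ℝ (Fin (m+1+1))) with hv
  set y : EuclideanSpace ℝ (Fin m) := WithLp.toLp 2 (fun j => v (Fin.castSucc (Fin.castSucc j)) :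
    Fin m → ℝ) with hy
  set a : ℝ := v (Fin.castSucc (Fin.last m)) with ha
  set b : ℝ := v (Fin.last (m+1)) with hb
  have hnorm : ‖v‖ = 1 := by
    have := u.2
    simp only [Sph] at this
    rwa [mem_sphere_zero_iff_norm] at this
  have hsum : ‖y‖^2 + (a^2 + b^2) = 1 := by
    have h1 : ∑ i : Fin (m+2), ‖v i‖^2 = 1 := by
      have h2 : Real.sqrt (∑ i : Fin (m+2), ‖v i‖^2) = 1 := by
        rw [← EuclideanSpace.norm_eq, hnorm]
      have h3 := congrArg (·^2) h2
      simp only at h3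
      rwa [Real.sq_sqrt (by positivity : (0:ℝ) ≤ ∑ i : Fin (m+2), ‖v i‖^2), one_pow] at h3
    rw [Fin.sum_univ_castSucc, Fin.sum_univ_castSucc] at h1
    have hy2 : ∑ j : Fin m, ‖v (Fin.castSucc (Fin.castSucc j))‖^2 = ‖y‖^2 := by
      rw [← euclid_norm_sq m y]
      exact Finset.sum_congr rfl fun j _ => by simp [Real.norm_eq_abs, sq_abs, hy]
    rw [hy2] at h1
    simp only [Real.norm_eq_abs, sq_abs] at h1
    rw [← ha, ← hb] at h1
    linarith
  have hy1 : ‖y‖ ≤ 1 := by nlinarith [norm_nonneg y, sq_nonneg a, sq_nonneg b]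
  have hyD : y ∈ Disk m := by
    simp only [Disk]
    rwa [mem_closedBall_zero_iff]
  have hrc : (1:ℝ) - ‖y‖^2 = a^2 + b^2 := by linarith
  rcases eq_or_lt_of_le (show (0:ℝ) ≤ a^2+b^2 by positivity) with h0 | hpos
  · have haz : a = 0 := by nlinarith
    have hbz : b = 0 := by nlinarith
    refine ⟨((z, ⟨y, hyD⟩), 0), ?_⟩
    refine Prod.ext rfl (Subtype.ext ?_)
    show sphMap m y ((0:I):ℝ) = v
    ext i
    refine Fin.lastCases ?_ (fun i => ?_) i
    · rw [sphMap_sin, hrc, ← h0, Real.sqrt_zero, ← hb, hbz]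
      simp
    · refine Fin.lastCases ?_ (fun j => ?_) i
      · rw [sphMap_cos, hrc, ← h0, Real.sqrt_zero, ← ha, haz]
        simp
      · rw [sphMap_castSucc]
  · have hr : 0 < Real.sqrt (a^2+b^2) := Real.sqrt_pos.mpr hpos
    have hsq : Real.sqrt (a^2+b^2)^2 = a^2+b^2 := Real.sq_sqrt hpos.le
    have hcs : (a / Real.sqrt (a^2+b^2))^2 + (b / Real.sqrt (a^2+b^2))^2 = 1 := by
      field_simp
      exact hsq.symm
    obtain ⟨t, htI, hcost, hsint⟩ := exists_angle _ _ hcs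
    refine ⟨((z, ⟨y, hyD⟩), ⟨t, htI⟩), ?_⟩
    refine Prod.ext rfl (Subtype.ext ?_)
    show sphMap m y t = v
    ext i
    refine Fin.lastCases ?_ (fun i => ?_) i
    · rw [sphMap_sin, hrc, hsint, ← hb]
      field_simp
    · refine Fin.lastCases ?_ (fun j => ?_) i
      · rw [sphMap_cos, hrc, hcost, ← ha]
        field_simp
      · rw [sphMap_castSucc]
lemma sphMap_continuous (m : ℕ) :
    Continuous (fun q : EuclideanSpace ℝ (Fin m) × ℝ => sphMap m q.1 q.2) := by
  have heq : (fun q : EuclideanSpace ℝ (Fin m) × ℝ => sphMap m q.1 q.2) =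
      fun q => (EuclideanSpace.equiv (Fin (m+2)) ℝ).symm
        (fun i => sphMap m q.1 q.2 i) := rfl
  rw [heq]
  refine Continuous.comp (ContinuousLinearEquiv.continuous _) (continuous_pi fun i => ?_)
  refine Fin.lastCases ?_ (fun i => ?_) i
  · simp only [sphMap_sin]
    fun_prop
  · refine Fin.lastCases ?_ (fun j => ?_) i
    · simp only [sphMap_cos]
      fun_prop
    · simp only [sphMap_castSucc]
      exact (EuclideanSpace.proj j).continuous.comp continuous_fst

lemma obF_snd_continuous (k m : ℕ) :
    Continuous (fun p : (↥(Sph k) × ↥(Disk m)) × I =>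
      sphMap m (p.1.2 : EuclideanSpace ℝ (Fin m)) (p.2 : ℝ)) := by
  have heq : (fun p : (↥(Sph k) × ↥(Disk m)) × I =>
        sphMap m (p.1.2 : EuclideanSpace ℝ (Fin m)) (p.2 : ℝ)) =
      fun p => (EuclideanSpace.equiv (Fin (m+2)) ℝ).symm
        (fun i => sphMap m (p.1.2 : EuclideanSpace ℝ (Fin m)) (p.2 : ℝ) i) := rfl
  rw [heq]
  refine Continuous.comp (ContinuousLinearEquiv.continuous _) (continuous_pi fun i => ?_)
  refine Fin.lastCases ?_ (fun i => ?_) i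
  · simp only [sphMap_sin]
    fun_prop
  · refine Fin.lastCases ?_ (fun j => ?_) i
    · simp only [sphMap_cos]
      fun_prop
    · simp only [sphMap_castSucc]
      exact (EuclideanSpace.proj j).continuous.comp
        (continuous_subtype_val.comp (continuous_snd.comp continuous_fst))

lemma obF_continuous (k m : ℕ) : Continuous (obF k m) :=
  (continuous_fst.comp continuous_fst).prodMk ((obF_snd_continuous k m).subtype_mk _)

/-- `Ob(S^k × D^m, id) ≅ S^k × S^{m+1}`. -/
theorem openBook_sphere_prod_disk_id_homeo (k m : ℕ) (hk : 1 ≤ k) (hm : 1 ≤ m) :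
    Nonempty (Quot (obRelSD k m) ≃ₜ ↥(Sph k) × ↥(Sph (m + 1))) := by
  haveI : CompactSpace (Sph k) := isCompact_iff_compactSpace.mp (isCompact_sphere 0 1)
  haveI : CompactSpace (Disk m) := isCompact_iff_compactSpace.mp (isCompact_closedBall 0 1)
  haveI : CompactSpace (Quot (obRelSD k m)) := ⟨by
    rw [← Set.range_quot_mk]
    exact isCompact_range continuous_quot_mk⟩
  have hbij : Function.Bijective (Quot.lift (obF k m) (obF_rel k m)) := by
    constructor
    · intro p q h
      induction p using Quot.ind with | _ p => ?_
      induction q using Quot.ind with | _ q => ?_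
      exact obF_inj k m p q h
    · intro u
      obtain ⟨p, hp⟩ := obF_surj k m u
      exact ⟨Quot.mk _ p, hp⟩
  have hcont : Continuous (Quot.lift (obF k m) (obF_rel k m)) :=
    continuous_quot_lift _ (obF_continuous k m)
  exact ⟨Continuous.homeoOfEquivCompactToT2
    (f := Equiv.ofBijective _ hbij) hcont⟩
end
end
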